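/- arXiv:1308.4049 — 2 statements merged into one kernel-verified Lean document; each statement's English description precedes it below -/
import Mathlib

section
/- Let (x(t), y(t)) be measurable strategy paths of a continuous-time fictitious play process in a bimatrix game (A,B), with empirical averages p(t) = (1/t)∫_0^t x(s)ds and q(t) = (1/t)∫_0^t y(s)ds, satisfying x(t) ∈ BR_A(q(t)) for all t ≥ 1. Then for all T > 1, ∫_1^T x(t)·A·y(t) dt = T·Ā(q(T)) − Ā(q(1)), where Ā(q) = max_i (Aq)_i. -/
open scoped BigOperators

/-- Maximal entry of the vector `A q`: player A's best payoff against `q`. -/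
noncomputable def Abar {m n : ℕ} (A : Matrix (Fin (m + 1)) (Fin (n + 1)) ℝ)
    (q : Fin (n + 1) → ℝ) : ℝ :=
  Finset.univ.sup' Finset.univ_nonempty (fun i => ∑ j, A i j * q j)


open MeasureTheory intervalIntegral Filter Topology Set Metric

section Helpers

lemma bdd_intervalIntegrable {E : Type*} [NormedAddCommGroup E] {f : ℝ → E}
    (hf : AEStronglyMeasurable f volume) {C : ℝ}
    (hC : ∀ t, ‖f t‖ ≤ C) (a b : ℝ) : IntervalIntegrable f volume a b := by
  apply IntervalIntegrable.mono_fun' (g := fun _ => C) intervalIntegrable_const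
  · exact hf.restrict
  · exact Filter.Eventually.of_forall fun t => hC t

lemma bdd_locallyIntegrable {f : ℝ → ℝ}
    (hf : Measurable f) {C : ℝ} (hC : ∀ t, |f t| ≤ C) : LocallyIntegrable f volume := by
  rw [locallyIntegrable_iff]
  intro k hk
  exact Measure.integrableOn_of_bounded hk.measure_lt_top.ne hf.aestronglyMeasurable
    (Filter.Eventually.of_forall fun t => by simpa [Real.norm_eq_abs] using hC t)

lemma half_tendsto : Tendsto (fun h : ℝ => h / 2) (𝓝[>] 0) (𝓝[>] (0:ℝ)) := by
  rw [tendsto_nhdsWithin_iff]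
  constructor
  · have : Tendsto (fun h : ℝ => h / 2) (𝓝 0) (𝓝 (0/2)) :=
      (continuous_id.div_const 2).tendsto 0
    simpa using this.mono_left nhdsWithin_le_nhds
  · filter_upwards [self_mem_nhdsWithin] with h (hh : 0 < h)
    exact mem_Ioi.mpr (by linarith)

/-- One-sided Lebesgue differentiation for bounded measurable functions. -/
lemma ae_onesided_avg {f : ℝ → ℝ} (hf : Measurable f) {C : ℝ} (hC : ∀ t, |f t| ≤ C) :
    ∀ᵐ t : ℝ, Tendsto (fun h : ℝ => (1/h) * ∫ u in t..(t+h), f u) (𝓝[>] 0) (𝓝 (f t)) ∧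
      Tendsto (fun h : ℝ => (1/h) * ∫ u in (t-h)..t, f u) (𝓝[>] 0) (𝓝 (f t)) := by
  have hli : LocallyIntegrable f volume := bdd_locallyIntegrable hf hC
  have hint : ∀ a b : ℝ, IntervalIntegrable f volume a b :=
    bdd_intervalIntegrable hf.aestronglyMeasurable (by simpa [Real.norm_eq_abs] using hC)
  filter_upwards [IsUnifLocDoublingMeasure.ae_tendsto_average_norm_sub
    (μ := (volume : Measure ℝ)) hli 1] with t ht
  -- auxiliary: integrability of |f - f t|
  have habs : ∀ a b : ℝ, IntervalIntegrable (fun u => |f u - f t|) volume a b := by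
    intro a b
    refine bdd_intervalIntegrable ((hf.sub measurable_const).abs).aestronglyMeasurable
      (C := C + |f t|) (fun u => ?_) a b
    have := hC u
    simp only [Real.norm_eq_abs, abs_abs]
    calc |f u - f t| ≤ |f u| + |f t| := abs_sub _ _
      _ ≤ C + |f t| := by linarith
  constructor
  · -- right averages
    have havg : Tendsto (fun h : ℝ => ⨍ u in closedBall (t + h/2) (h/2), ‖f u - f t‖)
        (𝓝[>] 0) (𝓝 0) := by
      refine ht (fun h : ℝ => t + h/2) (fun h => h/2) half_tendsto ?_
      filter_upwards [self_mem_nhdsWithin] with h (hh : 0 < h)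
      rw [mem_closedBall, Real.dist_eq]
      rw [one_mul]
      rw [abs_of_nonpos (by linarith)]
      linarith
    have key : ∀ h : ℝ, 0 < h →
        ‖(1/h) * (∫ u in t..(t+h), f u) - f t‖
          ≤ ⨍ u in closedBall (t + h/2) (h/2), ‖f u - f t‖ := by
      intro h hh
      have hball : closedBall (t + h/2) (h/2) = Icc t (t+h) := by
        rw [Real.closedBall_eq_Icc]; congr 1 <;> ring
      have hIccIoc : (volume (Icc t (t+h))) = ENNReal.ofReal h := by
        rw [Real.volume_Icc]; congr 1; ring
      rw [hball, setAverage_eq]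
      have hIccEq : ∫ u in Icc t (t+h), ‖f u - f t‖ = ∫ u in t..(t+h), |f u - f t| := by
        rw [intervalIntegral.integral_of_le (by linarith)]
        simp only [Real.norm_eq_abs]
        exact setIntegral_congr_set MeasureTheory.Ioc_ae_eq_Icc.symm
      rw [hIccEq, measureReal_def, hIccIoc, ENNReal.toReal_ofReal hh.le]
      have hsub : (1/h) * (∫ u in t..(t+h), f u) - f t
          = (1/h) * ∫ u in t..(t+h), (f u - f t) := by
        rw [intervalIntegral.integral_sub (hint _ _) intervalIntegrable_const,
          intervalIntegral.integral_const]
        field_simp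
        simp only [smul_eq_mul]; ring
      rw [hsub]
      rw [smul_eq_mul, Real.norm_eq_abs, abs_mul, abs_of_pos (by positivity : (0:ℝ) < 1/h)]
      rw [inv_eq_one_div]
      refine mul_le_mul_of_nonneg_left ?_ (by positivity)
      calc |∫ u in t..(t+h), (f u - f t)| ≤ ∫ u in t..(t+h), |f u - f t| :=
        intervalIntegral.abs_integral_le_integral_abs (by linarith)
        _ = _ := rfl
    have : Tendsto (fun h : ℝ => (1/h) * (∫ u in t..(t+h), f u) - f t) (𝓝[>] 0) (𝓝 0) := by
      refine squeeze_zero_norm' ?_ havg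
      filter_upwards [self_mem_nhdsWithin] with h (hh : 0 < h) using key h hh
    have := this.add_const (f t)
    simpa using this
  · -- left averages
    have havg : Tendsto (fun h : ℝ => ⨍ u in closedBall (t - h/2) (h/2), ‖f u - f t‖)
        (𝓝[>] 0) (𝓝 0) := by
      refine ht (fun h : ℝ => t - h/2) (fun h => h/2) half_tendsto ?_
      filter_upwards [self_mem_nhdsWithin] with h (hh : 0 < h)
      rw [mem_closedBall, Real.dist_eq, one_mul, abs_of_nonneg (by linarith)]
      linarith
    have key : ∀ h : ℝ, 0 < h →
        ‖(1/h) * (∫ u in (t-h)..t, f u) - f t‖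
          ≤ ⨍ u in closedBall (t - h/2) (h/2), ‖f u - f t‖ := by
      intro h hh
      have hball : closedBall (t - h/2) (h/2) = Icc (t-h) t := by
        rw [Real.closedBall_eq_Icc]; congr 1 <;> ring
      have hIccIoc : (volume (Icc (t-h) t)) = ENNReal.ofReal h := by
        rw [Real.volume_Icc]; congr 1; ring
      rw [hball, setAverage_eq]
      have hIccEq : ∫ u in Icc (t-h) t, ‖f u - f t‖ = ∫ u in (t-h)..t, |f u - f t| := by
        rw [intervalIntegral.integral_of_le (by linarith)]
        simp only [Real.norm_eq_abs]
        exact setIntegral_congr_set MeasureTheory.Ioc_ae_eq_Icc.symm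
      rw [hIccEq, measureReal_def, hIccIoc, ENNReal.toReal_ofReal hh.le]
      have hsub : (1/h) * (∫ u in (t-h)..t, f u) - f t
          = (1/h) * ∫ u in (t-h)..t, (f u - f t) := by
        rw [intervalIntegral.integral_sub (hint _ _) intervalIntegrable_const,
          intervalIntegral.integral_const]
        field_simp
        simp only [smul_eq_mul]; ring
      rw [hsub]
      rw [smul_eq_mul, Real.norm_eq_abs, abs_mul, abs_of_pos (by positivity : (0:ℝ) < 1/h)]
      rw [inv_eq_one_div]
      refine mul_le_mul_of_nonneg_left ?_ (by positivity)
      calc |∫ u in (t-h)..t, (f u - f t)| ≤ ∫ u in (t-h)..t, |f u - f t| :=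
        intervalIntegral.abs_integral_le_integral_abs (by linarith)
        _ = _ := rfl
    have : Tendsto (fun h : ℝ => (1/h) * (∫ u in (t-h)..t, f u) - f t) (𝓝[>] 0) (𝓝 0) := by
      refine squeeze_zero_norm' ?_ havg
      filter_upwards [self_mem_nhdsWithin] with h (hh : 0 < h) using key h hh
    have := this.add_const (f t)
    simpa using this


lemma dot_le_sup' {k : ℕ} {p : Fin (k+1) → ℝ} (hp : p ∈ stdSimplex ℝ (Fin (k+1)))
    (b : Fin (k+1) → ℝ) :
    ∑ i, p i * b i ≤ Finset.univ.sup' Finset.univ_nonempty b := by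
  calc ∑ i, p i * b i
      ≤ ∑ i, p i * (Finset.univ.sup' Finset.univ_nonempty b) := by
        refine Finset.sum_le_sum fun i _ => ?_
        exact mul_le_mul_of_nonneg_left (Finset.le_sup' b (Finset.mem_univ i)) (hp.1 i)
    _ = Finset.univ.sup' Finset.univ_nonempty b := by
        rw [← Finset.sum_mul, hp.2, one_mul]

lemma const_mul_sup' {k : ℕ} (c : ℝ) (hc : 0 ≤ c) (b : Fin (k+1) → ℝ) :
    c * Finset.univ.sup' Finset.univ_nonempty b
      = Finset.univ.sup' Finset.univ_nonempty (fun i => c * b i) := by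
  exact Finset.comp_sup'_eq_sup'_comp Finset.univ_nonempty (c * ·)
    (fun u v => by exact mul_max_of_nonneg u v hc)

end Helpers

/-- along a continuous-time fictitious play path,
`∫_1^T x(t)·A·y(t) dt = T·Ā(q(T)) − Ā(q(1))`. -/
theorem fp_integral_identity {m n : ℕ}
    (A : Matrix (Fin (m + 1)) (Fin (n + 1)) ℝ)
    (x : ℝ → Fin (m + 1) → ℝ) (y : ℝ → Fin (n + 1) → ℝ)
    (hxmeas : Measurable x) (hymeas : Measurable y)
    (hx : ∀ t, x t ∈ stdSimplex ℝ (Fin (m + 1)))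
    (hy : ∀ t, y t ∈ stdSimplex ℝ (Fin (n + 1)))
    (q : ℝ → Fin (n + 1) → ℝ)
    (hq : ∀ t > (0:ℝ), q t = (1 / t) • ∫ s in (0:ℝ)..t, y s)
    -- fictitious play: `x(t)` is a best response to the empirical average `q(t)` for `t ≥ 1`
    (hBR : ∀ t ≥ (1:ℝ), ∀ p' ∈ stdSimplex ℝ (Fin (m + 1)),
      ∑ i, ∑ j, p' i * A i j * q t j ≤ ∑ i, ∑ j, x t i * A i j * q t j) :
    ∀ T > (1:ℝ),
      (∫ t in (1:ℝ)..T, ∑ i, ∑ j, x t i * A i j * y t j)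
        = T * Abar A (q T) - Abar A (q 1) := by
  intro T hT
  -- basic facts about x, y
  have hyj_mem : ∀ s j, 0 ≤ y s j ∧ y s j ≤ 1 := by
    intro s j
    refine ⟨(hy s).1 j, ?_⟩
    have := Finset.single_le_sum (f := fun j => y s j) (fun j _ => (hy s).1 j)
      (Finset.mem_univ j)
    rw [(hy s).2] at this; exact this
  have hynorm : ∀ s, ‖y s‖ ≤ 1 := by
    intro s
    rw [pi_norm_le_iff_of_nonneg zero_le_one]
    intro j; rw [Real.norm_eq_abs, abs_le]
    constructor <;> [linarith [(hyj_mem s j).1]; exact (hyj_mem s j).2]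
  have hymeasj : ∀ j, Measurable (fun s => y s j) :=
    fun j => (measurable_pi_apply j).comp hymeas
  have hxmeasi : ∀ i, Measurable (fun t => x t i) :=
    fun i => (measurable_pi_apply i).comp hxmeas
  have hyint : ∀ a b : ℝ, IntervalIntegrable y volume a b :=
    bdd_intervalIntegrable hymeas.aestronglyMeasurable hynorm
  have hyintj : ∀ j (a b : ℝ), IntervalIntegrable (fun s => y s j) volume a b := by
    intro j a b
    refine bdd_intervalIntegrable (hymeasj j).aestronglyMeasurable (C := 1) (fun s => ?_) a b
    rw [Real.norm_eq_abs, abs_le]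
    constructor <;> [linarith [(hyj_mem s j).1]; exact (hyj_mem s j).2]
  -- coordinates of the vector integral
  have hcoord : ∀ (a b : ℝ) (j), (∫ s in a..b, y s) j = ∫ s in a..b, y s j := by
    intro a b j
    have := (ContinuousLinearMap.proj (R := ℝ) (φ := fun _ : Fin (n+1) => ℝ)
      j).intervalIntegral_comp_comm (hyint a b)
    simpa using this.symm
  -- the payoff-rate functions
  set w : Fin (m+1) → ℝ → ℝ := fun i u => ∑ j, A i j * y u j with hw
  set C₀ : ℝ := Finset.univ.sup' Finset.univ_nonempty (fun i : Fin (m+1) => ∑ j, |A i j|) + 1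
    with hC₀
  have hwbound : ∀ i u, |w i u| ≤ C₀ := by
    intro i u
    calc |w i u| ≤ ∑ j, |A i j * y u j| := Finset.abs_sum_le_sum_abs _ _
      _ ≤ ∑ j, |A i j| := by
          refine Finset.sum_le_sum fun j _ => ?_
          rw [abs_mul]
          nth_rewrite 2 [← mul_one |A i j|]
          refine mul_le_mul_of_nonneg_left ?_ (abs_nonneg _)
          rw [abs_le]; constructor <;> [linarith [(hyj_mem u j).1]; exact (hyj_mem u j).2]
      _ ≤ C₀ := by
          rw [hC₀]
          have := Finset.le_sup' (fun i : Fin (m+1) => ∑ j, |A i j|) (Finset.mem_univ i)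
          linarith
  have hC₀pos : 0 < C₀ := by
    rw [hC₀]
    have h1 := Finset.le_sup' (fun i : Fin (m+1) => ∑ j, |A i j|) (Finset.mem_univ (0 : Fin (m+1)))
    have h2 : (0:ℝ) ≤ ∑ j, |A (0 : Fin (m+1)) j| := Finset.sum_nonneg fun j _ => abs_nonneg _
    linarith
  have hwmeas : ∀ i, Measurable (w i) := by
    intro i
    exact Finset.measurable_sum _ fun j _ => (hymeasj j).const_mul _
  have hwint : ∀ i (a b : ℝ), IntervalIntegrable (w i) volume a b := fun i a b =>
    bdd_intervalIntegrable (hwmeas i).aestronglyMeasurable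
      (fun u => by simpa [Real.norm_eq_abs] using hwbound i u) a b
  -- primitives
  set g : Fin (m+1) → ℝ → ℝ := fun i t => ∫ u in (0:ℝ)..t, w i u with hg
  have hgcont : ∀ i, Continuous (g i) := fun i =>
    intervalIntegral.continuous_primitive (fun a b => hwint i a b) 0
  have hgadd : ∀ i (a b : ℝ), g i b - g i a = ∫ u in a..b, w i u := by
    intro i a b
    have := intervalIntegral.integral_add_adjacent_intervals (hwint i 0 a) (hwint i a b)
    rw [hg]; simp only []
    linarith [this]
  have hgdiffbound : ∀ i (a b : ℝ), |g i b - g i a| ≤ C₀ * |b - a| := by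
    intro i a b
    rw [hgadd]
    have := intervalIntegral.norm_integral_le_of_norm_le_const
      (C := C₀) (f := w i) (a := a) (b := b)
      (fun u _ => by simpa [Real.norm_eq_abs] using hwbound i u)
    simpa [Real.norm_eq_abs] using this
  set G : ℝ → ℝ := fun t => Finset.univ.sup' Finset.univ_nonempty (fun i => g i t) with hG
  have hGcont : Continuous G :=
    Continuous.finset_sup'_apply Finset.univ_nonempty (fun i _ => hgcont i)
  have hGhcont : ∀ h : ℝ, Continuous fun t => G (t + h) :=
    fun h => hGcont.comp (continuous_add_right h)
  -- relation between Abar (q t) and G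
  have hsum_g : ∀ t > (0:ℝ), ∀ i, ∑ j, A i j * q t j = (1/t) * g i t := by
    intro t ht i
    have hqt := hq t ht
    have : ∀ j, q t j = (1/t) * ∫ s in (0:ℝ)..t, y s j := by
      intro j
      rw [hqt]; simp [hcoord 0 t j]
    calc ∑ j, A i j * q t j = ∑ j, (1/t) * (A i j * ∫ s in (0:ℝ)..t, y s j) := by
          refine Finset.sum_congr rfl fun j _ => ?_; rw [this j]; ring
      _ = (1/t) * ∑ j, A i j * ∫ s in (0:ℝ)..t, y s j := by rw [← Finset.mul_sum]
      _ = (1/t) * ∑ j, ∫ s in (0:ℝ)..t, A i j * y s j := by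
          congr 1; refine Finset.sum_congr rfl fun j _ => ?_
          rw [intervalIntegral.integral_const_mul]
      _ = (1/t) * g i t := by
          congr 1
          rw [hg]; simp only []
          rw [← intervalIntegral.integral_finset_sum (fun j _ => (hyintj j 0 t).const_mul _)]
  have hAbarG : ∀ t > (0:ℝ), Abar A (q t) = (1/t) * G t := by
    intro t ht
    rw [Abar, hG]
    rw [const_mul_sup' (1/t) (by positivity) (fun i => g i t)]
    congr 1; funext i; rw [hsum_g t ht i]
  -- G t = x t · g t  for t ≥ 1
  have hGx : ∀ t, 1 ≤ t → G t = ∑ i, x t i * g i t := by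
    intro t ht1
    have ht : (0:ℝ) < t := by linarith
    set D : ℝ := ∑ i, ∑ j, x t i * A i j * q t j with hD
    have hDval : D = ∑ i, x t i * ((1/t) * g i t) := by
      rw [hD]
      refine Finset.sum_congr rfl fun i _ => ?_
      rw [← hsum_g t ht i, Finset.mul_sum]
      refine Finset.sum_congr rfl fun j _ => by ring
    have hle : ∀ i, (1/t) * g i t ≤ D := by
      intro i
      have hsingle : Pi.single i (1:ℝ) ∈ stdSimplex ℝ (Fin (m+1)) := by
        constructor
        · intro j; rw [Pi.single_apply]; split <;> norm_num
        · simp [Pi.single_apply]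
      have := hBR t ht1 (Pi.single i 1) hsingle
      have hLHS : ∑ i', ∑ j, (Pi.single i (1:ℝ) : Fin (m+1) → ℝ) i' * A i' j * q t j
          = ∑ j, A i j * q t j := by
        rw [Finset.sum_eq_single i]
        · refine Finset.sum_congr rfl fun j _ => by rw [Pi.single_eq_same]; ring
        · intro i' _ hne
          refine Finset.sum_eq_zero fun j _ => by rw [Pi.single_eq_of_ne hne]; ring
        · intro habs; exact absurd (Finset.mem_univ i) habs
      rw [hLHS] at this
      rw [hsum_g t ht i] at this
      exact this
    have hge : D ≤ (1/t) * G t := by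
      rw [hDval, ← hAbarG t ht, Abar]
      have := dot_le_sup' (hx t) (fun i => ∑ j, A i j * q t j)
      calc ∑ i, x t i * ((1/t) * g i t) = ∑ i, x t i * (∑ j, A i j * q t j) := by
            refine Finset.sum_congr rfl fun i _ => by rw [hsum_g t ht i]
        _ ≤ _ := this
    have hle' : (1/t) * G t ≤ D := by
      rw [hG]
      rw [const_mul_sup' (1/t) (by positivity) (fun i => g i t)]
      exact Finset.sup'_le _ _ fun i _ => hle i
    have hDeq : D = (1/t) * G t := le_antisymm hge hle'
    have : ∑ i, x t i * g i t = t * D := by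
      rw [hDval, Finset.mul_sum]
      refine Finset.sum_congr rfl fun i _ => ?_
      field_simp
    rw [this, hDeq]
    field_simp

  -- instantaneous payoff function
  set F : ℝ → ℝ := fun t => ∑ i, x t i * w i t with hFdef
  have hxb : ∀ t i, 0 ≤ x t i ∧ x t i ≤ 1 := by
    intro t i
    refine ⟨(hx t).1 i, ?_⟩
    have := Finset.single_le_sum (f := fun i => x t i) (fun i _ => (hx t).1 i)
      (Finset.mem_univ i)
    rw [(hx t).2] at this; exact this
  have hFmeas : Measurable F := Finset.measurable_sum _ fun i _ => (hxmeasi i).mul (hwmeas i)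
  have hdotbound : ∀ (p : Fin (m+1) → ℝ) (c : Fin (m+1) → ℝ) (K : ℝ),
      p ∈ stdSimplex ℝ (Fin (m+1)) → (∀ i, |c i| ≤ K) → |∑ i, p i * c i| ≤ K := by
    intro p c K hp hc
    calc |∑ i, p i * c i| ≤ ∑ i, |p i * c i| := Finset.abs_sum_le_sum_abs _ _
      _ ≤ ∑ i, p i * K := by
          refine Finset.sum_le_sum fun i _ => ?_
          rw [abs_mul, abs_of_nonneg (hp.1 i)]
          exact mul_le_mul_of_nonneg_left (hc i) (hp.1 i)
      _ = K := by rw [← Finset.sum_mul, hp.2, one_mul]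
  have hFbound : ∀ t, |F t| ≤ C₀ := fun t =>
    hdotbound (x t) (fun i => w i t) C₀ (hx t) (fun i => hwbound i t)
  -- the primitive of G
  set Ψ : ℝ → ℝ := fun b => ∫ u in (1:ℝ)..b, G u with hΨdef
  have hGint : ∀ a b : ℝ, IntervalIntegrable G volume a b :=
    fun a b => hGcont.intervalIntegrable a b
  have hΨd : ∀ a : ℝ, HasDerivAt Ψ (G a) a := fun a =>
    intervalIntegral.integral_hasDerivAt_right (hGint 1 a)
      (hGcont.stronglyMeasurableAtFilter volume (𝓝 a)) hGcont.continuousAt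
  have hslope : ∀ (a : ℝ),
      Tendsto (fun h : ℝ => (1/h) * (Ψ (a+h) - Ψ a)) (𝓝[>] 0) (𝓝 (G a)) := by
    intro a
    have h1 := hasDerivAt_iff_tendsto_slope.mp (hΨd a)
    have hmap : Tendsto (fun h : ℝ => a + h) (𝓝[>] (0:ℝ)) (𝓝[≠] a) := by
      rw [tendsto_nhdsWithin_iff]
      constructor
      · have : Tendsto (fun h : ℝ => a + h) (𝓝 0) (𝓝 (a+0)) :=
          (continuous_const.add continuous_id).tendsto 0
        simpa using this.mono_left nhdsWithin_le_nhds
      · filter_upwards [self_mem_nhdsWithin] with h (hh : 0 < h)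
        simp only [mem_compl_iff, mem_singleton_iff]
        intro habs; nlinarith [habs]
    have h2 := h1.comp hmap
    refine h2.congr fun h => ?_
    show slope Ψ a (a + h) = (1/h) * (Ψ (a+h) - Ψ a)
    rw [slope_def_field]
    rw [add_sub_cancel_left]
    ring
  -- the increment integral A h
  have hGh_int : ∀ h : ℝ, IntervalIntegrable (fun t => G (t+h) - G t) volume 1 T :=
    fun h => ((hGhcont h).sub hGcont).intervalIntegrable 1 T
  have hAh : ∀ h : ℝ, (∫ t in (1:ℝ)..T, (G (t+h) - G t))
      = (Ψ (T+h) - Ψ T) - (Ψ (1+h) - Ψ 1) := by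
    intro h
    rw [intervalIntegral.integral_sub
      ((hGhcont h).intervalIntegrable 1 T) (hGint 1 T)]
    have h1 : ∫ t in (1:ℝ)..T, G (t+h) = ∫ u in (1+h)..(T+h), G u :=
      intervalIntegral.integral_comp_add_right G h
    have h3 : ∫ u in (1+h)..(T+h), G u = Ψ (T+h) - Ψ (1+h) := by
      have := intervalIntegral.integral_add_adjacent_intervals (hGint 1 (1+h))
        (hGint (1+h) (T+h))
      rw [hΨdef]; simp only []
      linarith
    have h4 : Ψ 1 = 0 := intervalIntegral.integral_same
    rw [h1, h3, h4]
    rw [hΨdef]; ring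
  have hATend : Tendsto (fun h : ℝ => (1/h) * ∫ t in (1:ℝ)..T, (G (t+h) - G t))
      (𝓝[>] 0) (𝓝 (G T - G 1)) := by
    have := (hslope T).sub (hslope 1)
    refine Tendsto.congr (fun h => ?_) this
    rw [hAh h]; ring
  -- Lebesgue points
  have hLeb : ∀ᵐ t : ℝ, ∀ i,
      (Tendsto (fun h : ℝ => (1/h) * ∫ u in t..(t+h), w i u) (𝓝[>] 0) (𝓝 (w i t)) ∧
       Tendsto (fun h : ℝ => (1/h) * ∫ u in (t-h)..t, w i u) (𝓝[>] 0) (𝓝 (w i t))) :=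
    (MeasureTheory.ae_all_iff).mpr fun i => ae_onesided_avg (hwmeas i) (hwbound i)
  -- bounds for the difference-quotient integrands
  have hsumbound : ∀ (p : Fin (m+1) → ℝ), p ∈ stdSimplex ℝ (Fin (m+1)) →
      ∀ (a b : ℝ), |∑ i, p i * (g i b - g i a)| ≤ C₀ * |b - a| := by
    intro p hp a b
    refine hdotbound p _ _ hp fun i => hgdiffbound i a b
  -- ===== LOWER BOUND =====
  have hLmeas : ∀ h : ℝ, Measurable (fun t => (1/h) * ∑ i, x t i * (g i (t+h) - g i t)) := by
    intro h
    exact (Finset.measurable_sum _ fun i _ => (hxmeasi i).mul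
      (((hgcont i).measurable.comp (measurable_id.add_const h)).sub
        (hgcont i).measurable)).const_mul _
  have hLbound : ∀ h : ℝ, 0 < h → ∀ t, |(1/h) * ∑ i, x t i * (g i (t+h) - g i t)| ≤ C₀ := by
    intro h hh t
    rw [abs_mul, abs_of_pos (by positivity : (0:ℝ) < 1/h)]
    have := hsumbound (x t) (hx t) t (t+h)
    have h2 : |t + h - t| = h := by rw [show t + h - t = h by ring, abs_of_pos hh]
    rw [h2] at this
    calc (1/h) * |∑ i, x t i * (g i (t+h) - g i t)| ≤ (1/h) * (C₀ * h) :=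
        mul_le_mul_of_nonneg_left this (by positivity)
      _ = C₀ := by field_simp
  have hlowTend : Tendsto
      (fun h : ℝ => ∫ t in (1:ℝ)..T, ((1/h) * ∑ i, x t i * (g i (t+h) - g i t)))
      (𝓝[>] 0) (𝓝 (∫ t in (1:ℝ)..T, F t)) := by
    apply intervalIntegral.tendsto_integral_filter_of_dominated_convergence
      (bound := fun _ => C₀)
    · exact Eventually.of_forall fun h => ((hLmeas h).aestronglyMeasurable).restrict
    · filter_upwards [self_mem_nhdsWithin] with h (hh : 0 < h)
      exact Eventually.of_forall fun t _ => by
        rw [Real.norm_eq_abs]; exact hLbound h hh t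
    · exact intervalIntegrable_const
    · filter_upwards [hLeb] with t ht _
      have h1 : ∀ i, Tendsto (fun h : ℝ => (1/h) * (g i (t+h) - g i t)) (𝓝[>] 0)
          (𝓝 (w i t)) := by
        intro i
        refine ((ht i).1).congr fun h => ?_
        rw [hgadd i t (t+h)]
      have h2 : Tendsto (fun h : ℝ => ∑ i, x t i * ((1/h) * (g i (t+h) - g i t)))
          (𝓝[>] 0) (𝓝 (∑ i, x t i * w i t)) :=
        tendsto_finset_sum _ fun i _ => tendsto_const_nhds.mul (h1 i)
      refine h2.congr fun h => ?_
      rw [Finset.mul_sum]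
      exact Finset.sum_congr rfl fun i _ => by ring
  have hlow : (∫ t in (1:ℝ)..T, F t) ≤ G T - G 1 := by
    refine le_of_tendsto_of_tendsto hlowTend hATend ?_
    filter_upwards [self_mem_nhdsWithin] with h (hh : 0 < h)
    show (∫ t in (1:ℝ)..T, ((1/h) * ∑ i, x t i * (g i (t+h) - g i t)))
      ≤ (1/h) * ∫ t in (1:ℝ)..T, (G (t+h) - G t)
    rw [← intervalIntegral.integral_const_mul]
    refine intervalIntegral.integral_mono_on (by linarith)
      (bdd_intervalIntegrable (hLmeas h).aestronglyMeasurable (C := C₀)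
        (fun t => by rw [Real.norm_eq_abs]; exact hLbound h hh t) 1 T)
      (((hGhcont h).sub hGcont).intervalIntegrable 1 T
        |>.const_mul _) ?_
    intro t htmem
    refine mul_le_mul_of_nonneg_left ?_ (by positivity)
    have h1 : ∑ i, x t i * g i (t+h) ≤ G (t+h) := dot_le_sup' (hx t) (fun i => g i (t+h))
    have h2 : G t = ∑ i, x t i * g i t := hGx t htmem.1
    calc ∑ i, x t i * (g i (t+h) - g i t)
        = (∑ i, x t i * g i (t+h)) - ∑ i, x t i * g i t := by
          rw [← Finset.sum_sub_distrib]
          exact Finset.sum_congr rfl fun i _ => by ring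
      _ ≤ G (t+h) - G t := by rw [h2]; linarith
  -- ===== UPPER BOUND =====
  set V : ℝ → ℝ → ℝ := fun h s => ∑ i, x s i * (g i s - g i (s-h)) with hVdef
  have hVmeas : ∀ h : ℝ, Measurable (V h) := by
    intro h
    exact Finset.measurable_sum _ fun i _ => (hxmeasi i).mul
      ((hgcont i).measurable.sub ((hgcont i).measurable.comp (measurable_id.sub_const h)))
  have hVbound : ∀ h : ℝ, 0 < h → ∀ s, |V h s| ≤ C₀ * h := by
    intro h hh s
    have := hsumbound (x s) (hx s) (s-h) s
    rwa [show s - (s - h) = h by ring, abs_of_pos hh] at this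
  have hVint : ∀ h : ℝ, 0 < h → ∀ a b : ℝ, IntervalIntegrable (V h) volume a b := by
    intro h hh a b
    exact bdd_intervalIntegrable (hVmeas h).aestronglyMeasurable (C := C₀ * h)
      (fun s => by simpa [Real.norm_eq_abs] using hVbound h hh s) a b
  have hUint : ∀ h : ℝ, 0 < h →
      (∫ t in (1:ℝ)..T, ∑ i, x (t+h) i * (g i (t+h) - g i t))
        = ∫ s in (1+h : ℝ)..(T+h), V h s := by
    intro h hh
    have h1 : ∀ t : ℝ, V h (t+h) = ∑ i, x (t+h) i * (g i (t+h) - g i t) := by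
      intro t
      rw [hVdef]; simp only []
      exact Finset.sum_congr rfl fun i _ => by rw [show t + h - h = t by ring]
    calc (∫ t in (1:ℝ)..T, ∑ i, x (t+h) i * (g i (t+h) - g i t))
        = ∫ t in (1:ℝ)..T, V h (t+h) := by
          refine intervalIntegral.integral_congr fun t _ => (h1 t).symm
      _ = ∫ s in (1+h : ℝ)..(T+h), V h s := intervalIntegral.integral_comp_add_right (V h) h
  have hVsplit : ∀ h : ℝ, 0 < h →
      (∫ s in (1+h : ℝ)..(T+h), V h s)
        = (∫ s in (1:ℝ)..T, V h s) + ((∫ s in T..(T+h), V h s) - ∫ s in (1:ℝ)..(1+h), V h s) := by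
    intro h hh
    have i1 := intervalIntegral.integral_add_adjacent_intervals
      (hVint h hh (1+h) 1) (hVint h hh 1 T)
    have i2 := intervalIntegral.integral_add_adjacent_intervals
      (hVint h hh (1+h) T) (hVint h hh T (T+h))
    have i3 : (∫ s in (1+h : ℝ)..1, V h s) = - ∫ s in (1:ℝ)..(1+h), V h s :=
      intervalIntegral.integral_symm 1 (1+h)
    linarith
  have herr : Tendsto (fun h : ℝ =>
      (1/h) * ((∫ s in T..(T+h), V h s) - ∫ s in (1:ℝ)..(1+h), V h s)) (𝓝[>] 0) (𝓝 0) := by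
    have hb : ∀ᶠ h in (𝓝[>] (0:ℝ)),
        ‖(1/h) * ((∫ s in T..(T+h), V h s) - ∫ s in (1:ℝ)..(1+h), V h s)‖ ≤ 2 * C₀ * h := by
      filter_upwards [self_mem_nhdsWithin] with h (hh : 0 < h)
      have e1 : |∫ s in T..(T+h), V h s| ≤ (C₀ * h) * |T + h - T| := by
        have := intervalIntegral.norm_integral_le_of_norm_le_const (C := C₀ * h)
          (f := V h) (a := T) (b := T+h)
          (fun s _ => by simpa [Real.norm_eq_abs] using hVbound h hh s)
        simpa [Real.norm_eq_abs] using this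
      have e2 : |∫ s in (1:ℝ)..(1+h), V h s| ≤ (C₀ * h) * |1 + h - 1| := by
        have := intervalIntegral.norm_integral_le_of_norm_le_const (C := C₀ * h)
          (f := V h) (a := (1:ℝ)) (b := 1+h)
          (fun s _ => by simpa [Real.norm_eq_abs] using hVbound h hh s)
        simpa [Real.norm_eq_abs] using this
      rw [show T + h - T = h by ring, abs_of_pos hh] at e1
      rw [show (1:ℝ) + h - 1 = h by ring, abs_of_pos hh] at e2
      rw [Real.norm_eq_abs, abs_mul, abs_of_pos (by positivity : (0:ℝ) < 1/h)]
      have e3 : |(∫ s in T..(T+h), V h s) - ∫ s in (1:ℝ)..(1+h), V h s|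
          ≤ 2 * (C₀ * h * h) := by
        calc |(∫ s in T..(T+h), V h s) - ∫ s in (1:ℝ)..(1+h), V h s|
            ≤ |∫ s in T..(T+h), V h s| + |∫ s in (1:ℝ)..(1+h), V h s| := abs_sub _ _
          _ ≤ 2 * (C₀ * h * h) := by linarith
      calc (1/h) * |(∫ s in T..(T+h), V h s) - ∫ s in (1:ℝ)..(1+h), V h s|
          ≤ (1/h) * (2 * (C₀ * h * h)) := mul_le_mul_of_nonneg_left e3 (by positivity)
        _ = 2 * C₀ * h := by field_simp
    have hc : Tendsto (fun h : ℝ => 2 * C₀ * h) (𝓝[>] (0:ℝ)) (𝓝 0) := by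
      have : Tendsto (fun h : ℝ => 2 * C₀ * h) (𝓝 0) (𝓝 (2 * C₀ * 0)) :=
        (continuous_const.mul continuous_id).tendsto 0
      simpa using this.mono_left nhdsWithin_le_nhds
    exact squeeze_zero_norm' hb hc
  have hVTend : Tendsto (fun h : ℝ => ∫ s in (1:ℝ)..T, ((1/h) * V h s))
      (𝓝[>] 0) (𝓝 (∫ t in (1:ℝ)..T, F t)) := by
    apply intervalIntegral.tendsto_integral_filter_of_dominated_convergence
      (bound := fun _ => C₀)
    · exact Eventually.of_forall fun h => (((hVmeas h).const_mul _).aestronglyMeasurable).restrict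
    · filter_upwards [self_mem_nhdsWithin] with h (hh : 0 < h)
      refine Eventually.of_forall fun s _ => ?_
      rw [Real.norm_eq_abs, abs_mul, abs_of_pos (by positivity : (0:ℝ) < 1/h)]
      calc (1/h) * |V h s| ≤ (1/h) * (C₀ * h) :=
          mul_le_mul_of_nonneg_left (hVbound h hh s) (by positivity)
        _ = C₀ := by field_simp
    · exact intervalIntegrable_const
    · filter_upwards [hLeb] with s hs _
      have h1 : ∀ i, Tendsto (fun h : ℝ => (1/h) * (g i s - g i (s-h))) (𝓝[>] 0)
          (𝓝 (w i s)) := by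
        intro i
        refine ((hs i).2).congr fun h => ?_
        rw [hgadd i (s-h) s]
      have h2 : Tendsto (fun h : ℝ => ∑ i, x s i * ((1/h) * (g i s - g i (s-h))))
          (𝓝[>] 0) (𝓝 (∑ i, x s i * w i s)) :=
        tendsto_finset_sum _ fun i _ => tendsto_const_nhds.mul (h1 i)
      refine h2.congr fun h => ?_
      rw [hVdef]; simp only []
      rw [Finset.mul_sum]
      exact Finset.sum_congr rfl fun i _ => by ring
  have huppTend : Tendsto (fun h : ℝ => (1/h) * ∫ s in (1+h : ℝ)..(T+h), V h s)
      (𝓝[>] 0) (𝓝 (∫ t in (1:ℝ)..T, F t)) := by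
    have := hVTend.add herr
    rw [add_zero] at this
    refine Tendsto.congr' ?_ this
    filter_upwards [self_mem_nhdsWithin] with h (hh : 0 < h)
    rw [intervalIntegral.integral_const_mul, hVsplit h hh]
    ring
  have hupp : G T - G 1 ≤ ∫ t in (1:ℝ)..T, F t := by
    refine le_of_tendsto_of_tendsto hATend huppTend ?_
    filter_upwards [self_mem_nhdsWithin] with h (hh : 0 < h)
    show (1/h) * (∫ t in (1:ℝ)..T, (G (t+h) - G t))
      ≤ (1/h) * ∫ s in (1+h : ℝ)..(T+h), V h s
    rw [← hUint h hh]
    refine mul_le_mul_of_nonneg_left ?_ (by positivity)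
    refine intervalIntegral.integral_mono_on (by linarith) (hGh_int h) ?_ ?_
    · refine bdd_intervalIntegrable ?_ (C := C₀ * h) ?_ 1 T
      · exact (Finset.measurable_sum _ fun i _ => ((hxmeasi i).comp
          (measurable_id.add_const h)).mul
          (((hgcont i).measurable.comp (measurable_id.add_const h)).sub
            (hgcont i).measurable)).aestronglyMeasurable
      · intro t
        have := hsumbound (x (t+h)) (hx (t+h)) t (t+h)
        rw [show t + h - t = h by ring, abs_of_pos hh] at this
        simpa [Real.norm_eq_abs] using this
    · intro t htmem
      have h1 : ∑ i, x (t+h) i * g i t ≤ G t := dot_le_sup' (hx (t+h)) (fun i => g i t)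
      have h2 : G (t+h) = ∑ i, x (t+h) i * g i (t+h) := hGx (t+h) (by linarith [htmem.1])
      calc G (t+h) - G t ≤ (∑ i, x (t+h) i * g i (t+h)) - ∑ i, x (t+h) i * g i t := by
            rw [h2]; linarith
        _ = ∑ i, x (t+h) i * (g i (t+h) - g i t) := by
            rw [← Finset.sum_sub_distrib]
            exact Finset.sum_congr rfl fun i _ => by ring
  -- ===== CONCLUSION =====
  have hmain : (∫ t in (1:ℝ)..T, F t) = G T - G 1 := le_antisymm hlow hupp
  have hintegrand : (fun t => ∑ i, ∑ j, x t i * A i j * y t j) = F := by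
    funext t
    rw [hFdef]; simp only []
    refine Finset.sum_congr rfl fun i _ => ?_
    rw [hw]; simp only []
    rw [Finset.mul_sum]
    exact Finset.sum_congr rfl fun j _ => by ring
  rw [hintegrand, hmain]
  have hqT := hAbarG T (by linarith)
  have hq1 := hAbarG 1 (by norm_num)
  rw [hqT, hq1]
  field_simp
end

section
/- The point ((1/3,1/3,1/3),(1/3,1/3,1/3)) is the unique Nash equilibrium of the bimatrix game (A_β,B_β) with A_β = [[1,0,β],[β,1,0],[0,β,1]] and B_β = [[-β,1,0],[0,-β,1],[1,0,-β]], for every β ∈ (0,1). -/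
private lemma pos_aux (β x y : ℝ) (hβ0 : 0 < β) (hβ1 : β < 1)
    (hx : 0 ≤ x) (hy : 0 ≤ y) (hxy : x + y = 1) : 0 < (1-β)*x + β*y := by
  rcases hx.eq_or_lt with h | h
  · have hy1 : y = 1 := by linarith
    rw [← h, hy1]; nlinarith
  · have h1 : 0 < (1-β)*x := mul_pos (by linarith) h
    have h2 : 0 ≤ β*y := mul_nonneg hβ0.le hy
    linarith

private lemma quad_pos (β : ℝ) : (0:ℝ) < 1 - β + β^2 := by nlinarith [sq_nonneg (2*β - 1)]

private lemma cub_pos (β : ℝ) (hβ0 : 0 < β) : (0:ℝ) < 1 + β + β^2 := by positivity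

set_option maxHeartbeats 1000000 in
private lemma nash_core (β P0 P1 P2 Q0 Q1 Q2 A G : ℝ)
    (hβ0 : 0 < β) (hβ1 : β < 1)
    (hP0 : 0 ≤ P0) (hP1 : 0 ≤ P1) (hP2 : 0 ≤ P2) (hPs : P0 + P1 + P2 = 1)
    (hQ0 : 0 ≤ Q0) (hQ1 : 0 ≤ Q1) (hQ2 : 0 ≤ Q2) (hQs : Q0 + Q1 + Q2 = 1)
    (hA0 : Q0 + β*Q2 ≤ A) (hA1 : β*Q0 + Q1 ≤ A) (hA2 : β*Q1 + Q2 ≤ A)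
    (hAd : A = P0*(Q0 + β*Q2) + P1*(β*Q0 + Q1) + P2*(β*Q1 + Q2))
    (hB0 : P2 - β*P0 ≤ G) (hB1 : P0 - β*P1 ≤ G) (hB2 : P1 - β*P2 ≤ G)
    (hGd : G = Q0*(P2 - β*P0) + Q1*(P0 - β*P1) + Q2*(P1 - β*P2)) :
    P0 = 1/3 ∧ P1 = 1/3 ∧ P2 = 1/3 ∧ Q0 = 1/3 ∧ Q1 = 1/3 ∧ Q2 = 1/3 := by
  -- G is positive
  have hbp : β*P0 + β*P1 + β*P2 = β := by linear_combination β*hPs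
  have hGpos : 0 < G := by linarith
  -- complementary slackness for player 1
  have t0 : 0 ≤ P0*(A - (Q0 + β*Q2)) := mul_nonneg hP0 (by linarith)
  have t1 : 0 ≤ P1*(A - (β*Q0 + Q1)) := mul_nonneg hP1 (by linarith)
  have t2 : 0 ≤ P2*(A - (β*Q1 + Q2)) := mul_nonneg hP2 (by linarith)
  have tsum : P0*(A - (Q0 + β*Q2)) + P1*(A - (β*Q0 + Q1)) + P2*(A - (β*Q1 + Q2)) = 0 := by
    linear_combination A*hPs + hAd
  have cs0 : P0 = 0 ∨ A = Q0 + β*Q2 := by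
    rcases mul_eq_zero.mp (by linarith : P0*(A - (Q0 + β*Q2)) = 0) with h | h
    · exact Or.inl h
    · exact Or.inr (by linarith)
  have cs1 : P1 = 0 ∨ A = β*Q0 + Q1 := by
    rcases mul_eq_zero.mp (by linarith : P1*(A - (β*Q0 + Q1)) = 0) with h | h
    · exact Or.inl h
    · exact Or.inr (by linarith)
  have cs2 : P2 = 0 ∨ A = β*Q1 + Q2 := by
    rcases mul_eq_zero.mp (by linarith : P2*(A - (β*Q1 + Q2)) = 0) with h | h
    · exact Or.inl h
    · exact Or.inr (by linarith)
  -- complementary slackness for player 2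
  have s0 : 0 ≤ Q0*(G - (P2 - β*P0)) := mul_nonneg hQ0 (by linarith)
  have s1 : 0 ≤ Q1*(G - (P0 - β*P1)) := mul_nonneg hQ1 (by linarith)
  have s2 : 0 ≤ Q2*(G - (P1 - β*P2)) := mul_nonneg hQ2 (by linarith)
  have ssum : Q0*(G - (P2 - β*P0)) + Q1*(G - (P0 - β*P1)) + Q2*(G - (P1 - β*P2)) = 0 := by
    linear_combination G*hQs + hGd
  -- implications p_i = 0 → q_{i+1} = 0
  have impA0 : P0 = 0 → Q1 = 0 := by
    intro h
    have hb : 0 ≤ β*P1 := mul_nonneg hβ0.le hP1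
    have : 0 < G - (P0 - β*P1) := by linarith
    rcases mul_eq_zero.mp (by linarith : Q1*(G - (P0 - β*P1)) = 0) with h' | h'
    · exact h'
    · linarith
  have impA1 : P1 = 0 → Q2 = 0 := by
    intro h
    have hb : 0 ≤ β*P2 := mul_nonneg hβ0.le hP2
    have : 0 < G - (P1 - β*P2) := by linarith
    rcases mul_eq_zero.mp (by linarith : Q2*(G - (P1 - β*P2)) = 0) with h' | h'
    · exact h'
    · linarith
  have impA2 : P2 = 0 → Q0 = 0 := by
    intro h
    have hb : 0 ≤ β*P0 := mul_nonneg hβ0.le hP0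
    have : 0 < G - (P2 - β*P0) := by linarith
    rcases mul_eq_zero.mp (by linarith : Q0*(G - (P2 - β*P0)) = 0) with h' | h'
    · exact h'
    · linarith
  -- implications q_j = 0 → p_j = 0
  have impB1 : Q1 = 0 → P1 = 0 := by
    intro h
    have hpos : 0 < (1-β)*Q0 + β*Q2 := pos_aux β Q0 Q2 hβ0 hβ1 hQ0 hQ2 (by linarith)
    have : 0 < A - (β*Q0 + Q1) := by nlinarith
    rcases mul_eq_zero.mp (by linarith : P1*(A - (β*Q0 + Q1)) = 0) with h' | h'
    · exact h'
    · linarith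
  have impB2 : Q2 = 0 → P2 = 0 := by
    intro h
    have hpos : 0 < (1-β)*Q1 + β*Q0 := pos_aux β Q1 Q0 hβ0 hβ1 hQ1 hQ0 (by linarith)
    have : 0 < A - (β*Q1 + Q2) := by nlinarith
    rcases mul_eq_zero.mp (by linarith : P2*(A - (β*Q1 + Q2)) = 0) with h' | h'
    · exact h'
    · linarith
  have impB0 : Q0 = 0 → P0 = 0 := by
    intro h
    have hpos : 0 < (1-β)*Q2 + β*Q1 := pos_aux β Q2 Q1 hβ0 hβ1 hQ2 hQ1 (by linarith)
    have : 0 < A - (Q0 + β*Q2) := by nlinarith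
    rcases mul_eq_zero.mp (by linarith : P0*(A - (Q0 + β*Q2)) = 0) with h' | h'
    · exact h'
    · linarith
  -- all components of p are nonzero
  have hP0ne : P0 ≠ 0 := by
    intro h
    have h1 := impB1 (impA0 h)
    have h2 := impB2 (impA1 h1)
    linarith
  have hP1ne : P1 ≠ 0 := by
    intro h
    have h2 := impB2 (impA1 h)
    have h0 := impB0 (impA2 h2)
    linarith
  have hP2ne : P2 ≠ 0 := by
    intro h
    have h0 := impB0 (impA2 h)
    have h1 := impB1 (impA0 h0)
    linarith
  have hQ0ne : Q0 ≠ 0 := fun h => hP0ne (impB0 h)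
  have hQ1ne : Q1 ≠ 0 := fun h => hP1ne (impB1 h)
  have hQ2ne : Q2 ≠ 0 := fun h => hP2ne (impB2 h)
  have hu0 : A = Q0 + β*Q2 := cs0.resolve_left hP0ne
  have hu1 : A = β*Q0 + Q1 := cs1.resolve_left hP1ne
  have hu2 : A = β*Q1 + Q2 := cs2.resolve_left hP2ne
  have hv0 : G = P2 - β*P0 := by
    rcases mul_eq_zero.mp (by linarith : Q0*(G - (P2 - β*P0)) = 0) with h | h
    · exact absurd h hQ0ne
    · linarith
  have hv1 : G = P0 - β*P1 := by
    rcases mul_eq_zero.mp (by linarith : Q1*(G - (P0 - β*P1)) = 0) with h | h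
    · exact absurd h hQ1ne
    · linarith
  have hv2 : G = P1 - β*P2 := by
    rcases mul_eq_zero.mp (by linarith : Q2*(G - (P1 - β*P2)) = 0) with h | h
    · exact absurd h hQ2ne
    · linarith
  have hquad : (0:ℝ) < 1 - β + β^2 := quad_pos β
  have hcub : (0:ℝ) < 1 + β + β^2 := cub_pos β hβ0
  -- solve for q
  have hx : (1 - β + β^2) * (Q0 - Q1) = 0 := by
    linear_combination hu1 - hu0 + β*hu2 - β*hu1
  have hq01 : Q0 = Q1 := by
    rcases mul_eq_zero.mp hx with h | h
    · linarith
    · linarith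
  have hq12 : Q1 = Q2 := by linear_combination hu2 - hu1 - β*hq01
  -- solve for p
  have hy : (1 + β + β^2) * (P1 - P2) = 0 := by
    linear_combination hv0 - hv1 + (1+β)*(hv1 - hv2)
  have hp12 : P1 = P2 := by
    rcases mul_eq_zero.mp hy with h | h
    · linarith
    · linarith
  have hp01 : P0 = P1 := by linear_combination hv2 - hv1 + β*hp12
  refine ⟨by linarith, by linarith, by linarith, by linarith, by linarith, by linarith⟩


/-- Expected payoff `p A q`. -/
def pay (A : Matrix (Fin 3) (Fin 3) ℝ) (p q : Fin 3 → ℝ) : ℝ :=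
  ∑ i, ∑ j, p i * A i j * q j

/-- `(p,q)` is a Nash equilibrium of the 3×3 bimatrix game `(A,B)`. -/
def IsNash (A B : Matrix (Fin 3) (Fin 3) ℝ) (p q : Fin 3 → ℝ) : Prop :=
  p ∈ stdSimplex ℝ (Fin 3) ∧ q ∈ stdSimplex ℝ (Fin 3) ∧
  (∀ p' ∈ stdSimplex ℝ (Fin 3), pay A p' q ≤ pay A p q) ∧
  (∀ q' ∈ stdSimplex ℝ (Fin 3), pay B p q' ≤ pay B p q)

private lemma pay_A_expand (β : ℝ) (p q : Fin 3 → ℝ) :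
    pay (Matrix.of ![![1, 0, β], ![β, 1, 0], ![0, β, 1]]) p q =
      p 0 * (q 0 + β * q 2) + p 1 * (β * q 0 + q 1) + p 2 * (β * q 1 + q 2) := by
  simp only [pay, Fin.sum_univ_three, Matrix.of_apply, Matrix.cons_val_zero, Matrix.cons_val_one,
    Matrix.head_cons, Matrix.cons_val_two, Matrix.tail_cons]
  ring

private lemma pay_B_expand (β : ℝ) (p q : Fin 3 → ℝ) :
    pay (Matrix.of ![![-β, 1, 0], ![0, -β, 1], ![1, 0, -β]]) p q =
      q 0 * (p 2 - β * p 0) + q 1 * (p 0 - β * p 1) + q 2 * (p 1 - β * p 2) := by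
  simp only [pay, Fin.sum_univ_three, Matrix.of_apply, Matrix.cons_val_zero, Matrix.cons_val_one,
    Matrix.head_cons, Matrix.cons_val_two, Matrix.tail_cons]
  ring

private lemma e0_mem : (![(1:ℝ),0,0]) ∈ stdSimplex ℝ (Fin 3) :=
  ⟨fun x => by fin_cases x <;> norm_num, by simp [Fin.sum_univ_three]⟩

private lemma e1_mem : (![(0:ℝ),1,0]) ∈ stdSimplex ℝ (Fin 3) :=
  ⟨fun x => by fin_cases x <;> norm_num, by simp [Fin.sum_univ_three]⟩

private lemma e2_mem : (![(0:ℝ),0,1]) ∈ stdSimplex ℝ (Fin 3) :=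
  ⟨fun x => by fin_cases x <;> norm_num, by simp [Fin.sum_univ_three]⟩

/-- `((1/3,1/3,1/3),(1/3,1/3,1/3))` is the unique Nash equilibrium of
`(A_β, B_β)` for every `β ∈ (0,1)`. -/
theorem shapley_family_unique_nash (β : ℝ) (hβ : β ∈ Set.Ioo (0:ℝ) 1) :
    IsNash (Matrix.of ![![1, 0, β], ![β, 1, 0], ![0, β, 1]])
           (Matrix.of ![![-β, 1, 0], ![0, -β, 1], ![1, 0, -β]])
           (fun _ => 1 / 3) (fun _ => 1 / 3) ∧
    ∀ p q, IsNash (Matrix.of ![![1, 0, β], ![β, 1, 0], ![0, β, 1]])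
                  (Matrix.of ![![-β, 1, 0], ![0, -β, 1], ![1, 0, -β]]) p q →
      p = (fun _ => 1 / 3) ∧ q = (fun _ => 1 / 3) := by
  obtain ⟨hβ0, hβ1⟩ := hβ
  have unif_mem : (fun _ => (1:ℝ)/3) ∈ stdSimplex ℝ (Fin 3) :=
    ⟨fun _ => by norm_num, by norm_num [Fin.sum_univ_three]⟩
  constructor
  · refine ⟨unif_mem, unif_mem, ?_, ?_⟩
    · intro p' hp'
      have hs : p' 0 + p' 1 + p' 2 = 1 := by
        have := hp'.2; simpa [Fin.sum_univ_three] using this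
      rw [pay_A_expand, pay_A_expand]
      apply le_of_eq
      linear_combination ((1+β)/3) * hs
    · intro q' hq'
      have hs : q' 0 + q' 1 + q' 2 = 1 := by
        have := hq'.2; simpa [Fin.sum_univ_three] using this
      rw [pay_B_expand, pay_B_expand]
      apply le_of_eq
      linear_combination ((1-β)/3) * hs
  · intro p q hN
    obtain ⟨hp, hq, h1, h2⟩ := hN
    have hps : p 0 + p 1 + p 2 = 1 := by
      have := hp.2; simpa [Fin.sum_univ_three] using this
    have hqs : q 0 + q 1 + q 2 = 1 := by
      have := hq.2; simpa [Fin.sum_univ_three] using this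
    have hA0 := h1 _ e0_mem
    have hA1 := h1 _ e1_mem
    have hA2 := h1 _ e2_mem
    have hB0 := h2 _ e0_mem
    have hB1 := h2 _ e1_mem
    have hB2 := h2 _ e2_mem
    rw [pay_A_expand, pay_A_expand] at hA0 hA1 hA2
    rw [pay_B_expand, pay_B_expand] at hB0 hB1 hB2
    norm_num [Matrix.cons_val_two, Matrix.tail_cons, Matrix.head_cons] at hA0 hA1 hA2 hB0 hB1 hB2
    have key := nash_core β (p 0) (p 1) (p 2) (q 0) (q 1) (q 2)
      (p 0 * (q 0 + β * q 2) + p 1 * (β * q 0 + q 1) + p 2 * (β * q 1 + q 2))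
      (q 0 * (p 2 - β * p 0) + q 1 * (p 0 - β * p 1) + q 2 * (p 1 - β * p 2))
      hβ0 hβ1 (hp.1 0) (hp.1 1) (hp.1 2) hps (hq.1 0) (hq.1 1) (hq.1 2) hqs
      (by linarith) (by linarith) (by linarith) rfl
      (by linarith) (by linarith) (by linarith) rfl
    obtain ⟨k0, k1, k2, k3, k4, k5⟩ := key
    constructor
    · funext x; fin_cases x
      · exact k0
      · exact k1
      · exact k2
    · funext x; fin_cases x
      · exact k3
      · exact k4
      · exact k5
end
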